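/- Singular vectors of a blown up matrix are piecewise constant: if B is the blown up matrix of pattern P with block sizes m_i, n_j, and (v,u) is a singular vector pair of B for a singular value s > 0 (i.e., Bu = s·v and Bᵀv = s·u with u,v unit vectors), then v is constant on each of the a row blocks and u is constant on each of the b column blocks. -/

import Mathlib

open Matrix

noncomputable def enorm' {m : ℕ} (v : Fin m → ℝ) : ℝ := Real.sqrt (∑ i, v i ^ 2)

/-- Singular vectors of a blown up matrix corresponding to a positive singular value
are piecewise constant over the blocks. -/
theorem stmt3 {a b m n : ℕ} (P : Matrix (Fin a) (Fin b) ℝ)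
    (φ : Fin m → Fin a) (ψ : Fin n → Fin b)
    (hφ : Function.Surjective φ) (hψ : Function.Surjective ψ)
    (B : Matrix (Fin m) (Fin n) ℝ)
    (hB : ∀ i j, B i j = P (φ i) (ψ j))
    (s : ℝ) (hs : 0 < s) (v : Fin m → ℝ) (u : Fin n → ℝ)
    (hv : enorm' v = 1) (hu : enorm' u = 1)
    (h1 : B.mulVec u = s • v) (h2 : Bᵀ.mulVec v = s • u) :
    (∀ i i', φ i = φ i' → v i = v i') ∧ (∀ j j', ψ j = ψ j' → u j = u j') := by
  constructor
  · intro i i' h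
    have e1 := congrFun h1 i
    have e2 := congrFun h1 i'
    simp only [mulVec, dotProduct, Pi.smul_apply, smul_eq_mul] at e1 e2
    have : s * v i = s * v i' := by
      rw [← e1, ← e2]
      apply Finset.sum_congr rfl
      intro j _
      rw [hB, hB, h]
    exact mul_left_cancel₀ (ne_of_gt hs) this
  · intro j j' h
    have e1 := congrFun h2 j
    have e2 := congrFun h2 j'
    simp only [mulVec, dotProduct, transpose_apply, Pi.smul_apply, smul_eq_mul] at e1 e2
    have : s * u j = s * u j' := by
      rw [← e1, ← e2]
      apply Finset.sum_congr rfl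
      intro i _
      rw [hB, hB, h]
    exact mul_left_cancel₀ (ne_of_gt hs) this
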